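/- If x is a bounded operator on a complex Hilbert space with x - 1 Hilbert-Schmidt and x invertible, then the modulus |x| = (x*x)^{1/2} satisfies |x| - 1 is Hilbert-Schmidt and |x| is invertible. -/

import Mathlib

set_option synthInstance.maxHeartbeats 1000000
set_option maxHeartbeats 1000000

open scoped ENNReal
open NormedSpace

noncomputable section

variable {H : Type*} [NormedAddCommGroup H] [InnerProductSpace ℂ H] [CompleteSpace H]

/-- The index set of a chosen Hilbert basis of `H`. -/
def hsIndex (H : Type*) [NormedAddCommGroup H] [InnerProductSpace ℂ H] [CompleteSpace H] :
    Set H := (exists_hilbertBasis ℂ H).choose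

/-- The (possibly infinite) sum `∑ ‖x eᵢ‖²` over a Hilbert basis. -/
def hsSq (x : H →L[ℂ] H) : ℝ≥0∞ := ∑' i : hsIndex H, (‖x i‖₊ : ℝ≥0∞) ^ 2

/-- `x` is a Hilbert-Schmidt operator. -/
def IsHS (x : H →L[ℂ] H) : Prop := hsSq x ≠ ⊤

/-- The Hilbert-Schmidt norm `‖x‖₂`. -/
def hsNorm (x : H →L[ℂ] H) : ℝ := ((hsSq x) ^ (1/2 : ℝ)).toReal

/-- The modulus `|g| = (g* g)^{1/2}`. -/
def absOp (g : H →L[ℂ] H) : H →L[ℂ] H := CFC.sqrt (star g * g)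

/-- The unitary part `u_g = g |g|⁻¹` in the polar decomposition. -/
def umod (g : H →L[ℂ] H) : H →L[ℂ] H := g * Ring.inverse (absOp g)

/-- `GL₂(H) = {g invertible : g - 1 Hilbert-Schmidt}`. -/
def GL2 (H : Type*) [NormedAddCommGroup H] [InnerProductSpace ℂ H] [CompleteSpace H] :
    Set (H →L[ℂ] H) := {g | IsUnit g ∧ IsHS (g - 1)}

/-- The unitary group `U₂(H)`. -/
def U2 (H : Type*) [NormedAddCommGroup H] [InnerProductSpace ℂ H] [CompleteSpace H] :
    Set (H →L[ℂ] H) := {g | g ∈ unitary (H →L[ℂ] H) ∧ IsHS (g - 1)}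

/-- The positive invertible part `GL₂⁺(H)`. -/
def GL2pos (H : Type*) [NormedAddCommGroup H] [InnerProductSpace ℂ H] [CompleteSpace H] :
    Set (H →L[ℂ] H) := {g | IsUnit g ∧ IsHS (g - 1) ∧ 0 ≤ g}

/-- Smooth curves inside `S` joining `p` to `q` (parametrized on `[0,1]`). -/
def curves (S : Set (H →L[ℂ] H)) (p q : H →L[ℂ] H) : Set (ℝ → H →L[ℂ] H) :=
  {γ | ContDiff ℝ 1 γ ∧ (∀ t ∈ Set.Icc (0:ℝ) 1, γ t ∈ S) ∧ γ 0 = p ∧ γ 1 = q}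

/-- Length of a curve with respect to a metric `F` on tangent vectors. -/
def clen (F : (H →L[ℂ] H) → (H →L[ℂ] H) → ℝ) (γ : ℝ → H →L[ℂ] H) : ℝ :=
  ∫ t in (0:ℝ)..1, F (γ t) (deriv γ t)

/-- The geodesic distance inside `S` with respect to the metric `F`. -/
def gdist (S : Set (H →L[ℂ] H)) (F : (H →L[ℂ] H) → (H →L[ℂ] H) → ℝ)
    (p q : H →L[ℂ] H) : ℝ := sInf (clen F '' curves S p q)

/-- Left invariant metric `I(g, v) = ‖g⁻¹ v‖₂`. -/
def leftMetric (g v : H →L[ℂ] H) : ℝ := hsNorm (Ring.inverse g * v)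

/-- Positive metric `𝔭(p, y) = ‖p^{-1/2} y p^{-1/2}‖₂`. -/
def posMetric (p y : H →L[ℂ] H) : ℝ :=
  hsNorm (Ring.inverse (CFC.sqrt p) * y * Ring.inverse (CFC.sqrt p))

/-- Polar (product) length of a pair of curves (unitary part, positive part). -/
def pairLen (γ₁ γ₂ : ℝ → H →L[ℂ] H) : ℝ :=
  ∫ t in (0:ℝ)..1,
    Real.sqrt (leftMetric (γ₁ t) (deriv γ₁ t) ^ 2 + posMetric (γ₂ t) (deriv γ₂ t) ^ 2)

/-- Geodesic distance of the polar metric: infimum of polar lengths over pairs of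
curves, in the unitary set `SU` and the positive set `SP`, joining the polar
decompositions of `p` and `q`. -/
def polarDist (SU SP : Set (H →L[ℂ] H)) (p q : H →L[ℂ] H) : ℝ :=
  sInf {L | ∃ γ₁ ∈ curves SU (umod p) (umod q), ∃ γ₂ ∈ curves SP (absOp p) (absOp q),
    L = pairLen γ₁ γ₂}

/-- `x` is a Cauchy sequence for the distance function `d`. -/
def IsCauchyWith {A : Type*} (d : A → A → ℝ) (x : ℕ → A) : Prop :=
  ∀ ε > 0, ∃ N, ∀ m ≥ N, ∀ n ≥ N, d (x m) (x n) < ε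

/-- `x` converges to `l` for the distance function `d`. -/
def TendsToWith {A : Type*} (d : A → A → ℝ) (x : ℕ → A) (l : A) : Prop :=
  ∀ ε > 0, ∃ N, ∀ n ≥ N, d (x n) l < ε

/-- The chosen Hilbert basis. -/
def hsBasis (H : Type*) [NormedAddCommGroup H] [InnerProductSpace ℂ H] [CompleteSpace H] :
    HilbertBasis (hsIndex H) ℂ H := (exists_hilbertBasis ℂ H).choose_spec.choose

lemma hsBasis_apply (i : hsIndex H) : hsBasis H i = (i : H) :=
  congrFun (exists_hilbertBasis ℂ H).choose_spec.choose_spec i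

lemma ennParseval (v : H) :
    ∑' i : hsIndex H, (‖(inner ℂ (i : H) v : ℂ)‖₊ : ℝ≥0∞) ^ 2 = (‖v‖₊ : ℝ≥0∞) ^ 2 := by
  set b := hsBasis H
  have h2 : (0:ℝ) < (2 : ℝ≥0∞).toReal := by norm_num
  have hs : HasSum (fun i : hsIndex H => ‖b.repr v i‖ ^ (2 : ℝ≥0∞).toReal)
      (‖b.repr v‖ ^ (2 : ℝ≥0∞).toReal) := lp.hasSum_norm h2 (b.repr v)
  have h2' : (2 : ℝ≥0∞).toReal = ((2:ℕ) : ℝ) := by norm_num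
  have hs' : HasSum (fun i : hsIndex H => ‖(inner ℂ (i : H) v : ℂ)‖ ^ 2) (‖v‖ ^ 2) := by
    convert hs using 2 with i
    · rw [b.repr_apply_apply, hsBasis_apply, h2', Real.rpow_natCast]
    · rw [h2', Real.rpow_natCast, b.repr.norm_map]
  have hs'' : HasSum (fun i : hsIndex H => ‖(inner ℂ (i : H) v : ℂ)‖₊ ^ 2) (‖v‖₊ ^ 2) := by
    rw [← NNReal.hasSum_coe]
    convert hs' using 1 <;> push_cast <;> rfl
  simp_rw [← ENNReal.coe_pow]
  exact ENNReal.tsum_coe_eq hs''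

lemma hsSq_star (a : H →L[ℂ] H) : hsSq (star a) = hsSq a := by
  unfold hsSq
  calc ∑' i : hsIndex H, (‖star a (i : H)‖₊ : ℝ≥0∞) ^ 2
      = ∑' (i : hsIndex H) (j : hsIndex H),
          (‖(inner ℂ (j : H) (star a (i : H)) : ℂ)‖₊ : ℝ≥0∞) ^ 2 :=
        tsum_congr fun i => (ennParseval _).symm
    _ = ∑' (j : hsIndex H) (i : hsIndex H),
          (‖(inner ℂ (j : H) (star a (i : H)) : ℂ)‖₊ : ℝ≥0∞) ^ 2 := ENNReal.tsum_comm
    _ = ∑' j : hsIndex H, (‖a (j : H)‖₊ : ℝ≥0∞) ^ 2 := by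
        refine tsum_congr fun j => ?_
        rw [← ennParseval (a (j : H))]
        refine tsum_congr fun i => ?_
        rw [ContinuousLinearMap.star_eq_adjoint, ContinuousLinearMap.adjoint_inner_right]
        congr 2
        rw [← inner_conj_symm ((i : H)) (a (j : H)), RCLike.nnnorm_conj]

lemma IsHS.star' {a : H →L[ℂ] H} (ha : IsHS a) : IsHS (star a) := by
  unfold IsHS; rw [hsSq_star]; exact ha

lemma IsHS.mul_left (a : H →L[ℂ] H) {b : H →L[ℂ] H} (hb : IsHS b) : IsHS (a * b) := by
  unfold IsHS hsSq at *
  have key : ∑' i : hsIndex H, (‖(a * b) (i : H)‖₊ : ℝ≥0∞) ^ 2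
      ≤ (‖a‖₊ : ℝ≥0∞) ^ 2 * ∑' i : hsIndex H, (‖b (i : H)‖₊ : ℝ≥0∞) ^ 2 := by
    rw [← ENNReal.tsum_mul_left]
    refine ENNReal.tsum_le_tsum fun i => ?_
    have h1 : ‖(a * b) (i : H)‖₊ ≤ ‖a‖₊ * ‖b (i : H)‖₊ := by
      rw [ContinuousLinearMap.mul_apply]
      exact a.le_opNNNorm _
    calc (‖(a * b) (i : H)‖₊ : ℝ≥0∞) ^ 2
        ≤ ((‖a‖₊ : ℝ≥0∞) * (‖b (i : H)‖₊ : ℝ≥0∞)) ^ 2 := by gcongr; exact_mod_cast h1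
      _ = (‖a‖₊ : ℝ≥0∞) ^ 2 * (‖b (i : H)‖₊ : ℝ≥0∞) ^ 2 := by ring
  intro htop
  rw [htop, top_le_iff] at key
  rcases ENNReal.mul_eq_top.mp key with ⟨_, h⟩ | ⟨h, _⟩
  · exact hb h
  · exact (by norm_num : ((‖a‖₊ : ℝ≥0∞) ^ 2) ≠ ⊤) h

lemma IsHS.mul_right {a : H →L[ℂ] H} (ha : IsHS a) (b : H →L[ℂ] H) : IsHS (a * b) := by
  have := ((ha.star').mul_left (star b)).star'
  rwa [← star_mul, star_star] at this

lemma IsHS.add {a b : H →L[ℂ] H} (ha : IsHS a) (hb : IsHS b) : IsHS (a + b) := by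
  have key : ∀ p q : ℝ≥0∞, (p + q) ^ 2 ≤ 4 * (p ^ 2 + q ^ 2) := by
    intro p q
    rcases le_total p q with h | h
    · calc (p + q) ^ 2 ≤ (q + q) ^ 2 := by gcongr
        _ = 4 * q ^ 2 := by ring
        _ ≤ 4 * (p ^ 2 + q ^ 2) := by gcongr; exact le_add_self
    · calc (p + q) ^ 2 ≤ (p + p) ^ 2 := by gcongr
        _ = 4 * p ^ 2 := by ring
        _ ≤ 4 * (p ^ 2 + q ^ 2) := by gcongr; exact le_self_add
  unfold IsHS hsSq at *
  have hle : ∑' i : hsIndex H, (‖(a + b) (i : H)‖₊ : ℝ≥0∞) ^ 2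
      ≤ 4 * ((∑' i : hsIndex H, (‖a (i : H)‖₊ : ℝ≥0∞) ^ 2)
        + ∑' i : hsIndex H, (‖b (i : H)‖₊ : ℝ≥0∞) ^ 2) := by
    rw [← ENNReal.tsum_add, ← ENNReal.tsum_mul_left]
    refine ENNReal.tsum_le_tsum fun i => ?_
    refine le_trans ?_ (key _ _)
    have h1 : ‖(a + b) (i : H)‖₊ ≤ ‖a (i : H)‖₊ + ‖b (i : H)‖₊ := by
      rw [ContinuousLinearMap.add_apply]
      exact nnnorm_add_le _ _
    gcongr
    exact_mod_cast h1
  intro htop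
  rw [htop, top_le_iff] at hle
  have : (4 : ℝ≥0∞) ≠ ⊤ := by norm_num
  rcases ENNReal.mul_eq_top.mp hle with ⟨_, h⟩ | ⟨h, _⟩
  · exact (ENNReal.add_eq_top.mp h).elim ha hb
  · exact this h

theorem modulus_mem_GL2 (x : H →L[ℂ] H) (hx : IsUnit x) (hxHS : IsHS (x - 1)) :
    IsHS (absOp x - 1) ∧ IsUnit (absOp x) := by
  have hpos : (0 : H →L[ℂ] H) ≤ star x * x := star_mul_self_nonneg x
  have habs_nonneg : (0 : H →L[ℂ] H) ≤ absOp x := CFC.sqrt_nonneg _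
  have habs2 : absOp x * absOp x = star x * x := CFC.sqrt_mul_sqrt_self _ hpos
  have hu : IsUnit (star x * x) := hx.star.mul hx
  have hunit : IsUnit (absOp x) := by
    have h2 : IsUnit (absOp x ^ 2) := by rw [sq, habs2]; exact hu
    exact (isUnit_pow_iff two_ne_zero).mp h2
  refine ⟨?_, hunit⟩
  -- (star x * x) - 1 is Hilbert-Schmidt
  have hHS1 : IsHS (star x * x - 1) := by
    have heq : star x * x - 1 = star x * (x - 1) + star (x - 1) := by
      simp only [star_sub, star_one]
      noncomm_ring
    rw [heq]
    exact (IsHS.mul_left (star x) hxHS).add hxHS.star'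
  -- 1 + |x| is invertible
  have hpos_unit : IsUnit (1 + absOp x) :=
    CStarAlgebra.isUnit_of_le 1 (le_add_of_nonneg_right habs_nonneg) isStrictlyPositive_one
  have heq2 : absOp x - 1 = (star x * x - 1) * Ring.inverse (1 + absOp x) := by
    have hfac : star x * x - 1 = (absOp x - 1) * (1 + absOp x) := by
      rw [← habs2]; noncomm_ring
    rw [hfac, mul_assoc, Ring.mul_inverse_cancel _ hpos_unit, mul_one]
  rw [heq2]
  exact hHS1.mul_right _
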